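/- Assume the Continuum Hypothesis (2^{ℵ₀} = ℵ₁). Let Ā = ⟨a_α : α < ω₁⟩ be a club-splitting sequence and let B̄ = ⟨b_α : α < ω₁⟩ be a tail-splitting sequence. Then there exist infinite sets c_α ⊆ ω (α < ω₁), ⊆*-decreasing in α, and ordinals ζ_α ≥ α with c_α ⊆ b_{ζ_α}, such that the filter H on ω generated by {c_α : α < ω₁} together with the cofinite sets is a proper P-filter and (⋆)_{Ā,H} holds: for every partial function f : ω → ω whose domain is H-positive and such that f⁻¹({n}) belongs to the dual ideal H* for every n, the set D_f = {α < ω₁ : both f⁻¹(a_α) and f⁻¹(ω \ a_α) are H-positive} contains a closed unbounded subset of ω₁. -/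

import Mathlib

/-- `x` splits `b` iff both `x ∩ b` and `b \ x` are infinite. -/
def Splits (x b : Set ℕ) : Prop := (x ∩ b).Infinite ∧ (b \ x).Infinite

/-- `S` is a club (closed unbounded) subset of the ordinal `o`. -/
def IsClubIn (o : Ordinal) (S : Set Ordinal) : Prop :=
  S ⊆ Set.Iio o ∧
  (∀ α < o, ∃ β ∈ S, α ≤ β) ∧
  (∀ α < o, α ≠ 0 → (∀ β < α, ∃ γ ∈ S, β < γ ∧ γ < α) → α ∈ S)

/-- A tail-splitting sequence of length `κ`. -/
def TailSplittingSeq (κ : Cardinal) (a : Ordinal → Set ℕ) : Prop :=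
  (∀ α < κ.ord, (a α).Infinite) ∧
  ∀ b : Set ℕ, b.Infinite →
    ∃ α < κ.ord, ∀ β : Ordinal, α ≤ β → β < κ.ord → Splits (a β) b

/-- A club-splitting sequence of length `κ`. -/
def ClubSplittingSeq (κ : Cardinal) (a : Ordinal → Set ℕ) : Prop :=
  (∀ α < κ.ord, (a α).Infinite) ∧
  ∀ b : Set ℕ, b.Infinite →
    ∃ S : Set Ordinal, IsClubIn κ.ord S ∧ ∀ α ∈ S, Splits (a α) b

/-- The first uncountable ordinal. -/
noncomputable def omega1 : Ordinal := (Cardinal.aleph 1).ord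

/-! ### Basic facts about `omega1` -/

lemma omega1_isLimit : Order.IsSuccLimit omega1 := Cardinal.isSuccLimit_ord (by simp [Cardinal.aleph0_le_aleph])

lemma zero_lt_omega1 : (0 : Ordinal) < omega1 := omega1_isLimit.pos

lemma countable_Iio {α : Ordinal} (h : α < omega1) : (Set.Iio α).Countable := by
  rw [← Set.countable_coe_iff, ← Cardinal.mk_le_aleph0_iff]
  rw [Ordinal.mk_Iio_ordinal, Cardinal.lift_le_aleph0]
  have : α.card < Cardinal.aleph 1 := Cardinal.lt_ord.mp h
  rwa [← Order.lt_succ_iff, Cardinal.succ_aleph0]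

lemma sup_lt_omega1 {ι : Type} [Countable ι] (f : ι → Ordinal) (h : ∀ i, f i < omega1) :
    iSup f < omega1 := by
  have := Ordinal.iSup_lt_omega_one (f := f) (by simpa only [omega1, Cardinal.ord_aleph] using h)
  simpa only [omega1, Cardinal.ord_aleph] using this

lemma le_iSup_ord {ι : Type} (f : ι → Ordinal) (i : ι) : f i ≤ iSup f :=
  le_ciSup (Ordinal.bddAbove_range f) i

lemma lt_iSup_nat (f : ℕ → Ordinal) (x : Ordinal) (h : x < iSup f) : ∃ n, x < f n := by
  by_contra hc
  push_neg at hc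
  exact absurd (ciSup_le hc) (not_le.mpr h)

lemma bsup_lt_omega1 {t : Ordinal} (ht : t < omega1) (f : Ordinal → Ordinal)
    (hf : ∀ ξ < t, f ξ < omega1) : ∃ s < omega1, ∀ ξ < t, f ξ ≤ s := by
  by_cases ht0 : t = 0
  · exact ⟨0, zero_lt_omega1, fun ξ hξ => absurd hξ (ht0 ▸ (not_lt_zero : ¬ ξ < 0))⟩
  · obtain ⟨e, he⟩ := (countable_Iio ht).exists_eq_range
      ⟨0, pos_iff_ne_zero.mpr ht0⟩
    have helt : ∀ k, e k < t := fun k => by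
      have : e k ∈ Set.Iio t := he ▸ Set.mem_range_self k
      exact this
    refine ⟨iSup (fun k => f (e k)), sup_lt_omega1 _ (fun k => hf _ (helt k)), ?_⟩
    intro ξ hξ
    have : ξ ∈ Set.range e := he ▸ hξ
    obtain ⟨k, rfl⟩ := this
    exact le_iSup_ord (fun k => f (e k)) k

/-! ### Universe transfer below omega1 -/

universe u v

lemma omega1_lift : Ordinal.lift.{v,u} omega1.{u} = omega1.{max u v} := by
  rw [omega1, Cardinal.lift_ord, Cardinal.lift_aleph, omega1]
  congr 1
  simp

lemma trOrd_aux (ξ : Ordinal.{u}) :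
    ∃ η : Ordinal.{v}, ξ < omega1.{u} → Ordinal.lift.{u,v} η = Ordinal.lift.{v,u} ξ := by
  by_cases h : ξ < omega1.{u}
  · have h2 : Ordinal.lift.{v,u} ξ ≤ Ordinal.lift.{u,v} omega1.{v} := by
      rw [omega1_lift.{v,u}, ← omega1_lift.{u,v}]
      exact le_of_lt (Ordinal.lift_lt.mpr h)
    obtain ⟨η, hη⟩ := Ordinal.mem_range_lift_of_le h2
    exact ⟨η, fun _ => hη⟩
  · exact ⟨0, fun h' => absurd h' h⟩

noncomputable def trOrd (ξ : Ordinal.{u}) : Ordinal.{v} := Classical.choose (trOrd_aux.{u,v} ξ)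

lemma trOrd_lift {ξ : Ordinal.{u}} (h : ξ < omega1.{u}) :
    Ordinal.lift.{u,v} (trOrd.{u,v} ξ) = Ordinal.lift.{v,u} ξ :=
  Classical.choose_spec (trOrd_aux.{u,v} ξ) h

lemma trOrd_lt {ξ : Ordinal.{u}} (h : ξ < omega1.{u}) : trOrd.{u,v} ξ < omega1.{v} := by
  have h1 := trOrd_lift.{u,v} h
  have h2 : Ordinal.lift.{u,v} (trOrd.{u,v} ξ) < Ordinal.lift.{u,v} omega1.{v} := by
    rw [h1, omega1_lift.{v,u}, ← omega1_lift.{u,v}]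
    exact Ordinal.lift_lt.mpr h
  exact Ordinal.lift_lt.mp h2

lemma trOrd_trOrd {ξ : Ordinal.{u}} (h : ξ < omega1.{u}) :
    trOrd.{v,u} (trOrd.{u,v} ξ) = ξ := by
  have h1 := trOrd_lift.{u,v} h
  have h2 := trOrd_lift.{v,u} (trOrd_lt.{u,v} h)
  refine Ordinal.lift_inj.{v,u}.mp ?_
  rw [h2, h1]

lemma trOrd_lt_iff {ξ η : Ordinal.{u}} (hξ : ξ < omega1.{u}) (hη : η < omega1.{u}) :
    trOrd.{u,v} ξ < trOrd.{u,v} η ↔ ξ < η := by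
  rw [← Ordinal.lift_lt.{v,u} (a := ξ), ← trOrd_lift hξ, ← trOrd_lift hη, Ordinal.lift_lt]

lemma trOrd_le_iff {ξ η : Ordinal.{u}} (hξ : ξ < omega1.{u}) (hη : η < omega1.{u}) :
    trOrd.{u,v} ξ ≤ trOrd.{u,v} η ↔ ξ ≤ η := by
  rw [← not_lt, trOrd_lt_iff hη hξ, not_lt]

lemma trOrd_ne_zero {ξ : Ordinal.{u}} (h : ξ < omega1.{u}) (h0 : ξ ≠ 0) :
    trOrd.{u,v} ξ ≠ 0 := by
  intro hz
  have h1 := trOrd_lift.{u,v} h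
  rw [hz, Ordinal.lift_zero] at h1
  have : Ordinal.lift.{v,u} ξ = Ordinal.lift.{v,u} 0 := by rw [← h1, Ordinal.lift_zero]
  exact h0 (Ordinal.lift_inj.mp this)

lemma club_transfer {S : Set Ordinal.{u}} (h : IsClubIn omega1.{u} S) :
    IsClubIn omega1.{v} {η : Ordinal.{v} | η < omega1.{v} ∧ trOrd.{v,u} η ∈ S} := by
  obtain ⟨hsub, hunb, hcl⟩ := h
  refine ⟨fun η hη => hη.1, ?_, ?_⟩
  · intro α hα
    obtain ⟨β, hβS, hβge⟩ := hunb (trOrd.{v,u} α) (trOrd_lt hα)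
    have hβlt : β < omega1.{u} := hsub hβS
    refine ⟨trOrd.{u,v} β, ⟨trOrd_lt hβlt, by rwa [trOrd_trOrd hβlt]⟩, ?_⟩
    have := (trOrd_le_iff.{u,v} (trOrd_lt hα) hβlt).mpr hβge
    rwa [trOrd_trOrd hα] at this
  · intro α hα hα0 hcof
    refine ⟨hα, ?_⟩
    refine hcl (trOrd.{v,u} α) (trOrd_lt hα) (trOrd_ne_zero hα hα0) ?_
    intro β hβ
    have hβlt : β < omega1.{u} := lt_trans hβ (trOrd_lt hα)
    have hβ' : trOrd.{u,v} β < α := by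
      have := (trOrd_lt_iff.{u,v} hβlt (trOrd_lt hα)).mpr hβ
      rwa [trOrd_trOrd hα] at this
    obtain ⟨γ, ⟨hγlt, hγS⟩, hγgt, hγα⟩ := hcof (trOrd.{u,v} β) hβ'
    refine ⟨trOrd.{v,u} γ, hγS, ?_, ?_⟩
    · have := (trOrd_lt_iff.{v,u} (trOrd_lt hβlt) hγlt).mpr hγgt
      rwa [trOrd_trOrd hβlt] at this
    · exact (trOrd_lt_iff.{v,u} hγlt hα).mpr hγα

/-! ### CH and enumeration of pairs -/

lemma CH_any (h : (2:Cardinal.{v})^Cardinal.aleph0 = Cardinal.aleph 1) :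
    (2:Cardinal.{u})^Cardinal.aleph0 = Cardinal.aleph 1 := by
  apply Cardinal.lift_injective.{max u v, u}
  rw [Cardinal.lift_power, Cardinal.lift_two, Cardinal.lift_aleph0, Cardinal.lift_aleph]
  have h2 := congrArg (Cardinal.lift.{max u v, v}) h
  rw [Cardinal.lift_power, Cardinal.lift_two, Cardinal.lift_aleph0, Cardinal.lift_aleph] at h2
  rw [h2]
  congr 1
  simp

lemma exists_enum (hCH : (2:Cardinal.{v})^Cardinal.aleph0 = Cardinal.aleph 1) :
    ∃ F : Ordinal.{u} → Set ℕ × (ℕ → ℕ), ∀ p : Set ℕ × (ℕ → ℕ), ∃ γ < omega1.{u}, F γ = p := by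
  classical
  have hCH0 : (2:Cardinal.{0})^Cardinal.aleph0 = Cardinal.aleph 1 := CH_any hCH
  have hmk : (Cardinal.mk (Set ℕ × (ℕ → ℕ)) : Cardinal.{0}) ≤ Cardinal.aleph 1 := by
    rw [Cardinal.mk_prod, Cardinal.lift_id, Cardinal.lift_id, Cardinal.mk_set, Cardinal.mk_nat]
    have h2 : Cardinal.mk (ℕ → ℕ) ≤ (2:Cardinal.{0})^Cardinal.aleph0 := by
      have harr : Cardinal.mk (ℕ → ℕ) = Cardinal.aleph0 ^ Cardinal.aleph0 := by
        rw [Cardinal.mk_arrow]; simp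
      rw [harr, Cardinal.power_self_eq le_rfl]
    calc (2:Cardinal.{0})^Cardinal.aleph0 * Cardinal.mk (ℕ → ℕ)
        ≤ (2^Cardinal.aleph0) * (2^Cardinal.aleph0) := by
          gcongr
      _ = 2^Cardinal.aleph0 := by
          rw [← Cardinal.power_add]
          congr 1
          exact Cardinal.aleph0_add_aleph0
      _ = Cardinal.aleph 1 := hCH0
  have hmk2 : Cardinal.lift.{u,0} (Cardinal.mk (Set ℕ × (ℕ → ℕ)))
      ≤ Cardinal.lift.{0,u} (Cardinal.mk (omega1.{u}).ToType) := by
    rw [Cardinal.mk_toType]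
    rw [omega1, Cardinal.card_ord, Cardinal.lift_aleph]
    calc Cardinal.lift.{u,0} (Cardinal.mk (Set ℕ × (ℕ → ℕ)))
        ≤ Cardinal.lift.{u,0} (Cardinal.aleph 1) := Cardinal.lift_le.mpr hmk
      _ = Cardinal.aleph 1 := by rw [Cardinal.lift_aleph]; congr 1; simp
      _ = Cardinal.aleph (Ordinal.lift.{0,u} 1) := by congr 1; simp
  obtain ⟨ι⟩ := Cardinal.lift_mk_le'.mp hmk2
  set e := Ordinal.ToType.mk (o := omega1.{u})
  refine ⟨fun γ => if h : ∃ p : Set ℕ × (ℕ → ℕ), (↑(e.symm (ι p)) : Ordinal) = γ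
      then Classical.choose h else (∅, id), ?_⟩
  intro p
  refine ⟨(e.symm (ι p) : Set.Iio omega1.{u}), (e.symm (ι p)).2, ?_⟩
  have hex : ∃ q : Set ℕ × (ℕ → ℕ), (↑(e.symm (ι q)) : Ordinal) = ↑(e.symm (ι p)) := ⟨p, rfl⟩
  simp only [dif_pos hex]
  have := Classical.choose_spec hex
  have hval : e.symm (ι (Classical.choose hex)) = e.symm (ι p) := Subtype.ext this
  have := ι.injective (e.symm.injective hval)
  exact this

/-! ### Pseudo-intersection with preservation -/

lemma inter_chain_infinite (o : ℕ → Set ℕ)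
    (hdec : ∀ k n, k ≤ n → (o n \ o k).Finite) (k : ℕ) (Z : Set ℕ)
    (hZ : (o k ∩ Z).Infinite) : ((⋂ i ∈ Finset.range (k+1), o i) ∩ Z).Infinite := by
  have hfin : ((o k ∩ Z) \ (⋂ i ∈ Finset.range (k+1), o i)).Finite := by
    have : ((o k ∩ Z) \ (⋂ i ∈ Finset.range (k+1), o i)) ⊆
        ⋃ i ∈ Finset.range (k+1), (o k \ o i) := by
      intro x hx
      simp only [Set.mem_diff, Set.mem_inter_iff, Set.mem_iInter] at hx
      obtain ⟨⟨hxk, _⟩, hni⟩ := hx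
      push_neg at hni
      obtain ⟨i, hi, hxi⟩ := hni
      exact Set.mem_biUnion hi ⟨hxk, hxi⟩
    exact (Set.Finite.biUnion (Finset.range (k+1)).finite_toSet
      (fun i hi => hdec i k (by simpa using Nat.lt_succ_iff.mp (by simpa using hi)))).subset this
  have := hZ.diff hfin
  apply this.mono
  intro x hx
  obtain ⟨⟨h1, h2⟩, h3⟩ := hx
  rw [Set.mem_diff] at h3
  push_neg at h3
  exact ⟨h3 ⟨h1, h2⟩, h2⟩

lemma lemA (o : ℕ → Set ℕ) (ho : ∀ n, (o n).Infinite)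
    (hdec : ∀ k n, k ≤ n → (o n \ o k).Finite)
    (X : ℕ → Set ℕ) :
    ∃ d : Set ℕ, d.Infinite ∧ (∀ n, (d \ o n).Finite) ∧
      ∀ j, (∀ n, (o n ∩ X j).Infinite) → (d ∩ X j).Infinite := by
  classical
  set Y : ℕ → Set ℕ := fun k =>
    if (∀ n, (o n ∩ X k.unpair.1).Infinite) then X k.unpair.1 else Set.univ with hY
  have hT : ∀ k, ((⋂ i ∈ Finset.range (k+1), o i) ∩ Y k).Infinite := by
    intro k
    apply inter_chain_infinite o hdec
    by_cases h : ∀ n, (o n ∩ X k.unpair.1).Infinite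
    · rw [hY]; simp only [if_pos h]; exact h k
    · rw [hY]; simp only [if_neg h, Set.inter_univ]; exact ho k
  have step : ∀ (k : ℕ) (m : ℕ), ∃ x, x ∈ (⋂ i ∈ Finset.range (k+1), o i) ∩ Y k ∧ m < x :=
    fun k m => by obtain ⟨x, hx, hm⟩ := (hT k).exists_gt m; exact ⟨x, hx, hm⟩
  choose pick hpick hgt using step
  let p : ℕ → ℕ := fun k => Nat.rec (pick 0 0) (fun k ih => pick (k+1) ih) k
  have hps : ∀ k, p (k+1) = pick (k+1) (p k) := fun k => rfl
  have hpmem : ∀ k, p k ∈ (⋂ i ∈ Finset.range (k+1), o i) ∩ Y k := by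
    intro k; cases k with
    | zero => exact hpick 0 0
    | succ k => rw [hps]; exact hpick (k+1) (p k)
  have hpgt : ∀ k, p k < p (k+1) := fun k => by rw [hps]; exact hgt (k+1) (p k)
  have hmono : StrictMono p := strictMono_nat_of_lt_succ hpgt
  refine ⟨Set.range p, Set.infinite_range_of_injective hmono.injective, ?_, ?_⟩
  · intro n
    have hsub : Set.range p \ o n ⊆ p '' (Set.Iio n) := by
      rintro x ⟨⟨k, rfl⟩, hnk⟩
      refine ⟨k, ?_, rfl⟩
      by_contra hk
      rw [Set.mem_Iio, not_lt] at hk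
      have := (hpmem k).1
      simp only [Set.mem_iInter] at this
      exact hnk (this n (Finset.mem_range.mpr (by omega)))
    exact ((Set.finite_Iio n).image p).subset hsub
  · intro j hj
    have hsub : Set.range (fun n => p (Nat.pair j n)) ⊆ Set.range p ∩ X j := by
      rintro x ⟨n, rfl⟩
      refine ⟨⟨_, rfl⟩, ?_⟩
      have := (hpmem (Nat.pair j n)).2
      rw [hY] at this
      simp only [Nat.unpair_pair] at this
      rwa [if_pos hj] at this
    have hinj : Function.Injective (fun n => p (Nat.pair j n)) := by
      intro x y hxy
      have := hmono.injective hxy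
      have := congrArg (fun t => t.unpair.2) this
      simpa using this
    exact (Set.infinite_range_of_injective hinj).mono hsub

/-! ### Diagonal intersections of clubs -/

lemma diagonal_club (S : Ordinal → Set Ordinal)
    (hS : ∀ ξ < omega1, IsClubIn omega1 (S ξ)) (γ₀ : Ordinal) (hγ₀ : γ₀ < omega1) :
    IsClubIn omega1 {α | α < omega1 ∧ γ₀ < α ∧ ∀ ξ < α, α ∈ S ξ} := by
  classical
  have hsucc : ∀ {x : Ordinal}, x < omega1 → x + 1 < omega1 := fun h => omega1_isLimit.add_one_lt h
  have hpick : ∀ t ξ : Ordinal, ∃ β : Ordinal,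
      (t < omega1 ∧ ξ < omega1) → (β ∈ S ξ ∧ t + 1 ≤ β ∧ β < omega1) := by
    intro t ξ
    by_cases h : t < omega1 ∧ ξ < omega1
    · obtain ⟨β, hβS, hβge⟩ := (hS ξ h.2).2.1 (t + 1) (hsucc h.1)
      exact ⟨β, fun _ => ⟨hβS, hβge, (hS ξ h.2).1 hβS⟩⟩
    · exact ⟨0, fun h' => absurd h' h⟩
  choose pk hpk using hpick
  have hnext : ∀ t : Ordinal, ∃ s : Ordinal, s < omega1 ∧
      (t < omega1 → ∀ ξ < t, pk t ξ ≤ s) := by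
    intro t
    by_cases ht : t < omega1
    · obtain ⟨s, hs1, hs2⟩ := bsup_lt_omega1 ht (pk t)
        (fun ξ hξ => (hpk t ξ ⟨ht, lt_trans hξ ht⟩).2.2)
      exact ⟨s, hs1, fun _ => hs2⟩
    · exact ⟨0, zero_lt_omega1, fun h => absurd h ht⟩
  choose nxt hnxt1 hnxt2 using hnext
  refine ⟨fun α hα => hα.1, ?_, ?_⟩
  · intro α₀ hα₀
    let u : ℕ → Ordinal := fun n => Nat.rec (max α₀ (γ₀ + 1))
      (fun n un => (nxt un) ⊔ (un + 1)) n
    have hu0 : u 0 = max α₀ (γ₀ + 1) := rfl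
    have hus : ∀ n, u (n+1) = (nxt (u n)) ⊔ (u n + 1) := fun n => rfl
    have hult : ∀ n, u n < omega1 := by
      intro n
      induction n with
      | zero => exact max_lt hα₀ (hsucc hγ₀)
      | succ n ih =>
        rw [hus]
        exact max_lt (hnxt1 (u n)) (hsucc ih)
    have hults : ∀ n, u n < u (n+1) := fun n =>
      lt_of_lt_of_le (Order.lt_succ_of_le le_rfl) (by rw [hus]; exact le_max_right _ _)
    have humono : ∀ k n, k ≤ n → u k ≤ u n := by
      intro k n hkn
      induction n, hkn using Nat.le_induction with
      | base => exact le_rfl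
      | succ n hn ih => exact le_trans ih (le_of_lt (hults n))
    set A := iSup u with hA
    have hAlt : A < omega1 := sup_lt_omega1 u hult
    have huA : ∀ n, u n ≤ A := fun n => le_iSup_ord u n
    have huA' : ∀ n, u n < A := fun n => lt_of_lt_of_le (hults n) (huA (n+1))
    have hγ₀A : γ₀ < A := lt_of_lt_of_le (lt_of_lt_of_le (Order.lt_succ_of_le le_rfl)
      (le_max_right α₀ (γ₀+1))) (huA 0)
    have hA0 : A ≠ 0 := fun h => by
      have := huA' 0
      rw [h] at this
      exact absurd this (not_lt_of_ge zero_le)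
    refine ⟨A, ⟨hAlt, hγ₀A, ?_⟩, le_trans (le_trans (le_max_left _ _) (le_of_eq hu0.symm)) (huA 0)⟩
    intro ξ hξA
    have hξω : ξ < omega1 := lt_trans hξA hAlt
    obtain ⟨n₂, hn₂⟩ := lt_iSup_nat u ξ hξA
    refine (hS ξ hξω).2.2 A hAlt hA0 ?_
    intro β hβA
    obtain ⟨n₁, hn₁⟩ := lt_iSup_nat u β hβA
    set n := max n₁ n₂ with hn
    have hβu : β < u n := lt_of_lt_of_le hn₁ (humono _ _ (le_max_left _ _))
    have hξu : ξ < u n := lt_of_lt_of_le hn₂ (humono _ _ (le_max_right _ _))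
    have hp := hpk (u n) ξ ⟨hult n, hξω⟩
    refine ⟨pk (u n) ξ, hp.1, lt_of_lt_of_le (lt_of_lt_of_le hβu (Order.lt_succ_of_le le_rfl).le)
      hp.2.1, ?_⟩
    have h1 : pk (u n) ξ ≤ u (n+1) := by
      rw [hus]
      exact le_trans (hnxt2 (u n) (hult n) ξ hξu) (le_max_left _ _)
    exact lt_of_le_of_lt h1 (huA' (n+1))
  · intro α hα hα0 hcof
    have hγ₀α : γ₀ < α := by
      obtain ⟨γ, hγΔ, _, hγα⟩ := hcof 0 (pos_iff_ne_zero.mpr hα0)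
      exact lt_trans hγΔ.2.1 hγα
    refine ⟨hα, hγ₀α, ?_⟩
    intro ξ hξα
    refine (hS ξ (lt_trans hξα hα)).2.2 α hα hα0 ?_
    intro β hβα
    obtain ⟨γ, hγΔ, hγgt, hγα⟩ := hcof (max β ξ) (max_lt hβα hξα)
    exact ⟨γ, hγΔ.2.2 ξ (lt_of_le_of_lt (le_max_right β ξ) hγgt),
      lt_of_le_of_lt (le_max_left β ξ) hγgt, hγα⟩

/-! ### The recursive construction -/

section Constr
variable (a b : Ordinal → Set ℕ) (F : Ordinal → Set ℕ × (ℕ → ℕ))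

def Req (γ δ : Ordinal) (s : Bool) : Set ℕ :=
  {m | m ∈ (F γ).1 ∧ (if s then (F γ).2 m ∈ a δ else (F γ).2 m ∉ a δ)}

def Hyps (α : Ordinal) (prev : Ordinal → Set ℕ) : Prop :=
  α < omega1 ∧ (∀ ξ < α, (prev ξ).Infinite) ∧
  (∀ η ξ : Ordinal, η ≤ ξ → ξ < α → (prev ξ \ prev η).Finite)

def Spec (α : Ordinal) (prev : Ordinal → Set ℕ) (d : Set ℕ) (ζ : Ordinal) : Prop :=
  d.Infinite ∧ (∀ ξ < α, (d \ prev ξ).Finite) ∧ α ≤ ζ ∧ ζ < omega1 ∧ d ⊆ b ζ ∧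
  (∀ γ < α, ∀ δ ≤ α, ∀ s : Bool,
    (∀ ξ < α, (prev ξ ∩ Req a F γ δ s).Infinite) → (d ∩ Req a F γ δ s).Infinite)

lemma Hyps_congr {α : Ordinal} {p p' : Ordinal → Set ℕ}
    (h : ∀ ξ < α, p ξ = p' ξ) (hy : Hyps α p) : Hyps α p' := by
  obtain ⟨h1, h2, h3⟩ := hy
  refine ⟨h1, fun ξ hξ => (h ξ hξ) ▸ h2 ξ hξ, fun η ξ hηξ hξ => ?_⟩
  rw [← h ξ hξ, ← h η (lt_of_le_of_lt hηξ hξ)]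
  exact h3 η ξ hηξ hξ

lemma Spec_congr {α : Ordinal} {p p' : Ordinal → Set ℕ} {d : Set ℕ} {ζ : Ordinal}
    (h : ∀ ξ < α, p ξ = p' ξ) (hs : Spec a b F α p d ζ) : Spec a b F α p' d ζ := by
  obtain ⟨h1, h2, h3, h4, h5, h6⟩ := hs
  refine ⟨h1, fun ξ hξ => (h ξ hξ) ▸ h2 ξ hξ, h3, h4, h5, ?_⟩
  intro γ hγ δ hδ s halive
  exact h6 γ hγ δ hδ s (fun ξ hξ => (h ξ hξ) ▸ halive ξ hξ)

variable (hb : TailSplittingSeq (Cardinal.aleph 1) b)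
include hb

lemma stage_exists (α : Ordinal) (prev : Ordinal → Set ℕ) (h : Hyps α prev) :
    ∃ d ζ, Spec a b F α prev d ζ := by
  classical
  obtain ⟨hα1, hinf, hdec⟩ := h
  by_cases hα : α = 0
  · subst hα
    refine ⟨b 0, 0, hb.1 0 zero_lt_omega1, ?_, le_rfl, zero_lt_omega1, subset_rfl, ?_⟩
    · intro ξ hξ; exact absurd hξ ((not_lt_zero : ¬ ξ < 0))
    · intro γ hγ; exact absurd hγ ((not_lt_zero : ¬ γ < 0))
  · have hpos : 0 < α := pos_iff_ne_zero.mpr hα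
    obtain ⟨g, hg⟩ := (countable_Iio hα1).exists_eq_range ⟨0, hpos⟩
    have hglt : ∀ n, g n < α := fun n => by
      have : g n ∈ Set.Iio α := hg ▸ Set.mem_range_self n
      exact this
    have hgsurj : ∀ ξ < α, ∃ n, g n = ξ := fun ξ hξ => by
      have : ξ ∈ Set.range g := hg ▸ hξ
      exact this
    let m : ℕ → Ordinal := fun n => Nat.rec (g 0) (fun n ih => max ih (g (n+1))) n
    have hm0 : m 0 = g 0 := rfl
    have hms : ∀ n, m (n+1) = max (m n) (g (n+1)) := fun n => rfl
    have hmlt : ∀ n, m n < α := by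
      intro n; induction n with
      | zero => exact hglt 0
      | succ n ih => rw [hms]; exact max_lt ih (hglt (n+1))
    have hmmono : ∀ k n, k ≤ n → m k ≤ m n := by
      intro k n hkn
      induction n, hkn using Nat.le_induction with
      | base => exact le_rfl
      | succ n hn ih => rw [hms]; exact le_trans ih (le_max_left _ _)
    have hgm : ∀ n, g n ≤ m n := by
      intro n; cases n with
      | zero => exact le_of_eq hm0.symm
      | succ n => rw [hms]; exact le_max_right _ _
    let J : Set (Ordinal × Ordinal × Bool) := {p | p.1 < α ∧ p.2.1 ≤ α}
    have hJc : J.Countable := by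
      have : J ⊆ (Set.Iio α) ×ˢ ((Set.Iio (α+1)) ×ˢ (Set.univ : Set Bool)) := by
        rintro ⟨γ, δ, s⟩ ⟨h1, h2⟩
        exact ⟨h1, Order.lt_succ_iff.mpr h2, trivial⟩
      exact (((countable_Iio hα1).prod ((countable_Iio (omega1_isLimit.add_one_lt hα1)).prod
        (Set.to_countable _))).mono this)
    have hJne : J.Nonempty := ⟨(0, 0, true), hpos, le_of_lt hpos⟩
    obtain ⟨q, hq⟩ := hJc.exists_eq_range hJne
    have hqsurj : ∀ γ δ s, γ < α → δ ≤ α → ∃ j, q j = (γ, δ, s) := fun γ δ s h1 h2 => by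
      have : (γ, δ, s) ∈ Set.range q := hq ▸ (⟨h1, h2⟩ : (γ,δ,s) ∈ J)
      exact this
    let X : ℕ → Set ℕ := fun j => Req a F (q j).1 (q j).2.1 (q j).2.2
    obtain ⟨d, hdinf, hdsub, hdpres⟩ := lemA (fun n => prev (m n))
      (fun n => hinf _ (hmlt n)) (fun k n hkn => hdec _ _ (hmmono k n hkn) (hmlt n)) X
    have hwex : ∀ j : ℕ, ∃ ζj, ζj < omega1 ∧ ((d ∩ X j).Infinite →
        ∀ β, ζj ≤ β → β < omega1 → Splits (b β) (d ∩ X j)) := by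
      intro j
      by_cases hc : (d ∩ X j).Infinite
      · obtain ⟨ζj, h1, h2⟩ := hb.2 _ hc
        exact ⟨ζj, h1, fun _ => h2⟩
      · exact ⟨0, zero_lt_omega1, fun hcc => absurd hcc hc⟩
    choose w hw1 hw2 using hwex
    obtain ⟨ζd, hζd1, hζd2⟩ := hb.2 d hdinf
    set ζ : Ordinal := max α (max ζd (iSup w)) with hζ
    have hζlt : ζ < omega1 := max_lt hα1 (max_lt hζd1 (sup_lt_omega1 w hw1))
    have hαζ : α ≤ ζ := le_max_left _ _
    have hsplitd : Splits (b ζ) d :=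
      hζd2 ζ (le_trans (le_max_left _ _) (le_max_right _ _)) hζlt
    refine ⟨d ∩ b ζ, ζ, ?_, ?_, hαζ, hζlt, Set.inter_subset_right, ?_⟩
    · rw [Set.inter_comm]; exact hsplitd.1
    · intro ξ hξ
      obtain ⟨n, rfl⟩ := hgsurj ξ hξ
      have hsub : (d ∩ b ζ) \ prev (g n) ⊆ (d \ prev (m n)) ∪ (prev (m n) \ prev (g n)) := by
        intro x hx
        obtain ⟨⟨hxd, _⟩, hxp⟩ := hx
        by_cases hxm : x ∈ prev (m n)
        · exact Or.inr ⟨hxm, hxp⟩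
        · exact Or.inl ⟨hxd, hxm⟩
      exact ((hdsub n).union (hdec _ _ (hgm n) (hmlt n))).subset hsub
    · intro γ hγ δ hδ s halive
      obtain ⟨j, hj⟩ := hqsurj γ δ s hγ hδ
      have hXj : X j = Req a F γ δ s := by
        show Req a F (q j).1 (q j).2.1 (q j).2.2 = _
        rw [hj]
      have h1 : ∀ n, (prev (m n) ∩ X j).Infinite := by
        intro n; rw [hXj]; exact halive _ (hmlt n)
      have h2 : (d ∩ X j).Infinite := hdpres j h1
      have h3 := (hw2 j h2 ζ (le_trans (le_iSup_ord w j)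
        (le_trans (le_max_right _ _) (le_max_right _ _))) hζlt).1
      rw [hXj] at h3
      apply h3.mono
      intro x hx
      obtain ⟨hxb, hxd, hxr⟩ := hx
      exact ⟨⟨hxd, hxb⟩, hxr⟩

noncomputable def step (α : Ordinal) (prev : Ordinal → Set ℕ) : Set ℕ × Ordinal := by
  classical
  exact if h : Hyps α prev then
    ⟨Classical.choose (stage_exists a b F hb α prev h),
     Classical.choose (Classical.choose_spec (stage_exists a b F hb α prev h))⟩
  else (Set.univ, 0)

lemma step_spec {α : Ordinal} {prev : Ordinal → Set ℕ} (h : Hyps α prev) :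
    Spec a b F α prev (step a b F hb α prev).1 (step a b F hb α prev).2 := by
  unfold step
  simp only [dif_pos h]
  exact Classical.choose_spec (Classical.choose_spec (stage_exists a b F hb α prev h))

noncomputable def cseq : Ordinal → Set ℕ × Ordinal :=
  (wellFounded_lt (α := Ordinal)).fix
    (fun α prevf => step a b F hb α (fun ξ => if h : ξ < α then (prevf ξ h).1 else ∅))

lemma cseq_eq (α : Ordinal) :
    cseq a b F hb α
      = step a b F hb α (fun ξ => if h : ξ < α then (cseq a b F hb ξ).1 else ∅) := by
  rw [cseq, WellFounded.fix_eq]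

noncomputable def cs (α : Ordinal) : Set ℕ := (cseq a b F hb α).1
noncomputable def zs (α : Ordinal) : Ordinal := (cseq a b F hb α).2

lemma cs_spec : ∀ α < omega1,
    Spec a b F α (cs a b F hb) (cs a b F hb α) (zs a b F hb α) := by
  intro α
  induction α using Ordinal.induction with
  | _ α IH =>
    intro hα
    have hy : Hyps α (cs a b F hb) := by
      refine ⟨hα, fun ξ hξ => (IH ξ hξ (lt_trans hξ hα)).1, ?_⟩
      intro η ξ hηξ hξ
      rcases lt_or_eq_of_le hηξ with h' | h'
      · exact (IH ξ hξ (lt_trans hξ hα)).2.1 η h'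
      · subst h'; simp
    have hy' : Hyps α (fun ξ => if h : ξ < α then cs a b F hb ξ else ∅) :=
      Hyps_congr (fun ξ hξ => by rw [dif_pos hξ]) hy
    have := step_spec a b F hb hy'
    have heq : cseq a b F hb α
        = step a b F hb α (fun ξ => if h : ξ < α then cs a b F hb ξ else ∅) :=
      cseq_eq a b F hb α
    rw [cs, zs, heq]
    exact Spec_congr a b F (fun ξ hξ => by rw [dif_pos hξ]) this
end Constr

/-! ### The filter -/

section FilterPart
variable (c : Ordinal → Set ℕ)
  (hcinf : ∀ α < omega1, (c α).Infinite)
  (hcdec : ∀ α β : Ordinal, α ≤ β → β < omega1 → (c β \ c α).Finite)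

def HF : Filter ℕ := Filter.generate {x : Set ℕ | ∃ α < omega1, x = c α} ⊓ Filter.cofinite

include hcdec in
lemma mem_HF (s : Set ℕ) : s ∈ HF c ↔ ∃ α < omega1, (c α \ s).Finite := by
  constructor
  · intro hs
    rw [HF, Filter.mem_inf_iff] at hs
    obtain ⟨t₁, ht₁, t₂, ht₂, rfl⟩ := hs
    rw [Filter.mem_generate_iff] at ht₁
    obtain ⟨T, hTsub, hTfin, hTint⟩ := ht₁
    have key : ∃ μ < omega1, ∀ x ∈ T, (c μ \ x).Finite := by
      clear hTint
      induction T, hTfin using Set.Finite.induction_on with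
      | empty => exact ⟨0, zero_lt_omega1, fun x hx => absurd hx (Set.notMem_empty x)⟩
      | @insert x T' hx hT' ih =>
        obtain ⟨μ', hμ', hμ'T⟩ := ih (fun y hy => hTsub (Set.mem_insert_of_mem x hy))
        obtain ⟨α, hα, rfl⟩ := hTsub (Set.mem_insert x T')
        refine ⟨max μ' α, max_lt hμ' hα, fun y hy => ?_⟩
        rcases Set.mem_insert_iff.mp hy with rfl | hy'
        · exact hcdec α _ (le_max_right _ _) (max_lt hμ' hα)
        · exact ((hcdec μ' _ (le_max_left _ _) (max_lt hμ' hα)).union (hμ'T y hy')).subset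
            (fun z hz => by
              by_cases hzμ : z ∈ c μ'
              · exact Or.inr ⟨hzμ, hz.2⟩
              · exact Or.inl ⟨hz.1, hzμ⟩)
    obtain ⟨μ, hμ, hμT⟩ := key
    refine ⟨μ, hμ, ?_⟩
    have h1 : (c μ \ t₁).Finite := by
      have hsub : c μ \ t₁ ⊆ ⋃ x ∈ T, (c μ \ x) := by
        intro z hz
        have : z ∉ ⋂₀ T := fun hz' => hz.2 (hTint hz')
        rw [Set.mem_sInter] at this
        push_neg at this
        obtain ⟨x, hxT, hzx⟩ := this
        exact Set.mem_biUnion hxT ⟨hz.1, hzx⟩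
      exact (hTfin.biUnion (fun x hx => hμT x hx)).subset hsub
    have h2 : (c μ \ t₂).Finite := ht₂.subset (fun z hz => hz.2)
    exact (h1.union h2).subset (fun z hz => by
      by_cases h : z ∈ t₁
      · exact Or.inr ⟨hz.1, fun h2' => hz.2 ⟨h, h2'⟩⟩
      · exact Or.inl ⟨hz.1, h⟩)
  · rintro ⟨α, hα, hfin⟩
    have h1 : c α ∈ HF c :=
      Filter.mem_inf_of_left (Filter.mem_generate_of_mem ⟨α, hα, rfl⟩)
    have h2 : (c α \ s)ᶜ ∈ HF c := Filter.mem_inf_of_right (by simpa using hfin)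
    exact Filter.mem_of_superset (Filter.inter_mem h1 h2)
      (fun z hz => by
        by_contra hzs
        exact hz.2 ⟨hz.1, hzs⟩)

include hcdec in
lemma pos_HF (s : Set ℕ) : sᶜ ∉ HF c ↔ ∀ α < omega1, (c α ∩ s).Infinite := by
  rw [mem_HF c hcdec]
  push_neg
  constructor
  · intro h α hα
    intro hfin
    exact (h α hα) (hfin.subset (fun z hz => ⟨hz.1, not_not.mp hz.2⟩))
  · intro h α hα
    intro hfin
    exact (h α hα) (hfin.subset (fun z hz => ⟨hz.1, fun h' => h' hz.2⟩))

include hcinf hcdec in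
lemma empty_not_mem_HF : ∅ ∉ HF c := by
  rw [mem_HF c hcdec]
  rintro ⟨α, hα, hfin⟩
  exact (hcinf α hα) (hfin.subset (fun z hz => ⟨hz, Set.notMem_empty z⟩))

include hcinf hcdec in
lemma pfilter_HF : ∀ d : ℕ → Set ℕ, (∀ n, d n ∈ HF c) →
    ∃ A ∈ HF c, A.Infinite ∧ ∀ n, (A \ d n).Finite := by
  intro d hd
  have h := fun n => (mem_HF c hcdec (d n)).mp (hd n)
  choose g hg1 hg2 using h
  set μ := iSup g with hμ
  have hμlt : μ < omega1 := sup_lt_omega1 g hg1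
  refine ⟨c μ, (mem_HF c hcdec (c μ)).mpr ⟨μ, hμlt, by simp⟩, hcinf μ hμlt, fun n => ?_⟩
  have : c μ \ d n ⊆ (c μ \ c (g n)) ∪ (c (g n) \ d n) := fun z hz => by
    by_cases h' : z ∈ c (g n)
    · exact Or.inr ⟨h', hz.2⟩
    · exact Or.inl ⟨hz.1, h'⟩
  exact ((hcdec (g n) μ (le_iSup_ord g n) hμlt).union (hg2 n)).subset this
end FilterPart

/-! ### The star property -/

section Star
variable (a : Ordinal → Set ℕ) (F : Ordinal → Set ℕ × (ℕ → ℕ))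
variable (c : Ordinal → Set ℕ) (H : Filter ℕ)
  (hcdec : ∀ α β : Ordinal, α ≤ β → β < omega1 → (c β \ c α).Finite)
  (hmemH : ∀ s : Set ℕ, s ∈ H ↔ ∃ α < omega1, (c α \ s).Finite)
  (hposH : ∀ s : Set ℕ, sᶜ ∉ H ↔ ∀ α < omega1, (c α ∩ s).Infinite)
  (hcom : ∀ β < omega1, ∀ γ < β, ∀ δ ≤ β, ∀ s : Bool,
    (∀ ξ < β, (c ξ ∩ Req a F γ δ s).Infinite) → (c β ∩ Req a F γ δ s).Infinite)
  (ha : ClubSplittingSeq (Cardinal.aleph 1) a)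
  (hF : ∀ p : Set ℕ × (ℕ → ℕ), ∃ γ < omega1, F γ = p)

include hcdec hmemH hposH hcom ha hF in
lemma star_holds : ∀ (dom : Set ℕ) (f : ℕ → ℕ), domᶜ ∉ H →
    (∀ n : ℕ, {m ∈ dom | f m = n}ᶜ ∈ H) →
    ∃ S : Set Ordinal, IsClubIn omega1 S ∧ ∀ α ∈ S,
      {m ∈ dom | f m ∈ a α}ᶜ ∉ H ∧ {m ∈ dom | f m ∉ a α}ᶜ ∉ H := by
  classical
  intro dom f hdom hfib
  have hpos : ∀ ξ < omega1, (c ξ ∩ dom).Infinite := (hposH dom).mp hdom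
  have hfib' : ∀ n : ℕ, ∃ δ < omega1, (c δ ∩ {m ∈ dom | f m = n}).Finite := by
    intro n
    obtain ⟨δ, hδ, hfin⟩ := (hmemH _).mp (hfib n)
    exact ⟨δ, hδ, hfin.subset (fun z hz => ⟨hz.1, fun h' => h' hz.2⟩)⟩
  choose δf hδf1 hδf2 using hfib'
  have he : ∀ ξ < omega1, (f '' (c ξ ∩ dom)).Infinite := by
    intro ξ hξ
    intro hfin
    set E := f '' (c ξ ∩ dom) with hE
    haveI : Countable ↥E := hfin.countable.to_subtype
    set μ := max ξ (iSup (fun n : ↥E => δf n)) with hμ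
    have hμlt : μ < omega1 := max_lt hξ (sup_lt_omega1 _ (fun n => hδf1 n))
    have hsub : c μ ∩ dom ⊆ (c μ \ c ξ) ∪
        ⋃ n ∈ E, ((c μ \ c (δf n)) ∪ (c (δf n) ∩ {m ∈ dom | f m = n})) := by
      intro m hm
      by_cases hmξ : m ∈ c ξ
      · have hfm : f m ∈ E := ⟨m, ⟨hmξ, hm.2⟩, rfl⟩
        by_cases hmδ : m ∈ c (δf (f m))
        · exact Or.inr (Set.mem_biUnion hfm (Or.inr ⟨hmδ, hm.2, rfl⟩))
        · exact Or.inr (Set.mem_biUnion hfm (Or.inl ⟨hm.1, hmδ⟩))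
      · exact Or.inl ⟨hm.1, hmξ⟩
    have hfin2 : ((c μ \ c ξ) ∪
        ⋃ n ∈ E, ((c μ \ c (δf n)) ∪ (c (δf n) ∩ {m ∈ dom | f m = n}))).Finite := by
      refine (hcdec ξ μ (le_max_left _ _) hμlt).union (hfin.biUnion (fun n hn => ?_))
      refine (hcdec (δf n) μ ?_ hμlt).union (hδf2 n)
      exact le_trans (le_iSup_ord (fun n : ↥E => δf n) ⟨n, hn⟩) (le_max_right _ _)
    exact (hpos μ hμlt) ((hfin2.subset hsub))
  have hSex : ∀ ξ : Ordinal, ∃ S : Set Ordinal, ξ < omega1 →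
      (IsClubIn omega1 S ∧ ∀ α ∈ S, Splits (a α) (f '' (c ξ ∩ dom))) := by
    intro ξ
    by_cases hξ : ξ < omega1
    · obtain ⟨S, hS1, hS2⟩ := ha.2 _ (he ξ hξ)
      exact ⟨S, fun _ => ⟨hS1, hS2⟩⟩
    · exact ⟨∅, fun h => absurd h hξ⟩
  choose S hS using hSex
  obtain ⟨γ₀, hγ₀, hFγ₀⟩ := hF (dom, f)
  have hdomF : (F γ₀).1 = dom := by rw [hFγ₀]
  have hfF : (F γ₀).2 = f := by rw [hFγ₀]
  refine ⟨{α | α < omega1 ∧ γ₀ < α ∧ ∀ ξ < α, α ∈ S ξ},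
    diagonal_club S (fun ξ hξ => (hS ξ hξ).1) γ₀ hγ₀, ?_⟩
  intro α hα
  obtain ⟨hα1, hγ₀α, hαS⟩ := hα
  have key : ∀ s : Bool, ∀ ξ, ξ < omega1 → (c ξ ∩ Req a F γ₀ α s).Infinite := by
    intro s ξ
    induction ξ using Ordinal.induction with
    | _ ξ IH =>
      intro hξ
      by_cases hcase : ξ < α
      · have hsplit : Splits (a α) (f '' (c ξ ∩ dom)) :=
          (hS ξ (lt_trans hcase hα1)).2 α (hαS ξ hcase)
        have himg : (if s then (a α ∩ (f '' (c ξ ∩ dom)))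
            else ((f '' (c ξ ∩ dom)) \ a α)).Infinite := by
          cases s
          · simpa using hsplit.2
          · simpa using hsplit.1
        intro hfin
        have : (if s then (a α ∩ (f '' (c ξ ∩ dom)))
            else ((f '' (c ξ ∩ dom)) \ a α)) ⊆ f '' (c ξ ∩ Req a F γ₀ α s) := by
          intro y hy
          cases s with
          | true =>
            rw [if_pos rfl] at hy
            obtain ⟨m, hm, rfl⟩ := hy.2
            exact ⟨m, ⟨hm.1, by rw [Req]; exact ⟨hdomF ▸ hm.2, by simp [hfF, hy.1]⟩⟩, rfl⟩
          | false =>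
            rw [if_neg (by simp)] at hy
            obtain ⟨m, hm, rfl⟩ := hy.1
            exact ⟨m, ⟨hm.1, by rw [Req]; exact ⟨hdomF ▸ hm.2, by simp [hfF]; exact hy.2⟩⟩, rfl⟩
        exact himg ((hfin.image f).subset this)
      · have hle : α ≤ ξ := not_lt.mp hcase
        exact hcom ξ hξ γ₀ (lt_of_lt_of_le hγ₀α hle) α hle s
          (fun η hη => IH η hη (lt_trans hη hξ))
  have hReqT : Req a F γ₀ α true = {m ∈ dom | f m ∈ a α} := by
    rw [Req]; ext m; simp [hdomF, hfF]
  have hReqF : Req a F γ₀ α false = {m ∈ dom | f m ∉ a α} := by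
    rw [Req]; ext m; simp [hdomF, hfF]
  constructor
  · rw [hposH]
    intro ξ hξ
    rw [← hReqT]
    exact key true ξ hξ
  · rw [hposH]
    intro ξ hξ
    rw [← hReqF]
    exact key false ξ hξ
end Star

/-! ### Main theorem -/

theorem CH_Pfilter_star
    (hCH : (2 : Cardinal) ^ Cardinal.aleph0 = Cardinal.aleph 1)
    (a : Ordinal → Set ℕ) (ha : ClubSplittingSeq (Cardinal.aleph 1) a)
    (b : Ordinal → Set ℕ) (hb : TailSplittingSeq (Cardinal.aleph 1) b) :
    ∃ (c : Ordinal → Set ℕ) (ζ : Ordinal → Ordinal) (H : Filter ℕ),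
      (∀ α < omega1, (c α).Infinite) ∧
      (∀ α β : Ordinal, α ≤ β → β < omega1 → (c β \ c α).Finite) ∧
      (∀ α < omega1, α ≤ ζ α ∧ ζ α < omega1 ∧ c α ⊆ b (ζ α)) ∧
      H = Filter.generate {x : Set ℕ | ∃ α < omega1, x = c α} ⊓ Filter.cofinite ∧
      (∅ ∉ H) ∧
      (∀ d : ℕ → Set ℕ, (∀ n, d n ∈ H) →
        ∃ A ∈ H, A.Infinite ∧ ∀ n, (A \ d n).Finite) ∧
      (∀ (dom : Set ℕ) (f : ℕ → ℕ), domᶜ ∉ H →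
        (∀ n : ℕ, {m ∈ dom | f m = n}ᶜ ∈ H) →
        ∃ S : Set Ordinal, IsClubIn omega1 S ∧ ∀ α ∈ S,
          {m ∈ dom | f m ∈ a α}ᶜ ∉ H ∧ {m ∈ dom | f m ∉ a α}ᶜ ∉ H) := by
  classical
  obtain ⟨F, hF⟩ := exists_enum hCH
  set a' : Ordinal → Set ℕ := fun ξ => a (trOrd ξ) with ha'def
  have ha' : ClubSplittingSeq (Cardinal.aleph 1) a' := by
    constructor
    · intro α hα
      exact ha.1 _ (trOrd_lt hα)
    · intro e he
      obtain ⟨S, hclub, hsplit⟩ := ha.2 e he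
      exact ⟨_, club_transfer hclub, fun η hη => hsplit _ hη.2⟩
  set c : Ordinal → Set ℕ := cs a' b F hb with hc
  set z : Ordinal → Ordinal := zs a' b F hb with hz
  have hspec := cs_spec a' b F hb
  have hcinf : ∀ α < omega1, (c α).Infinite := fun α hα => (hspec α hα).1
  have hcdec : ∀ α β : Ordinal, α ≤ β → β < omega1 → (c β \ c α).Finite := by
    intro α β hab hβ
    rcases lt_or_eq_of_le hab with h | h
    · exact (hspec β hβ).2.1 α h
    · subst h; simp
  have hzp : ∀ α < omega1, α ≤ z α ∧ z α < omega1 ∧ c α ⊆ b (z α) := fun α hα =>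
    ⟨(hspec α hα).2.2.1, (hspec α hα).2.2.2.1, (hspec α hα).2.2.2.2.1⟩
  refine ⟨c, z, HF c, hcinf, hcdec, hzp, rfl, empty_not_mem_HF c hcinf hcdec,
    pfilter_HF c hcinf hcdec, ?_⟩
  intro dom f hdom hfib
  obtain ⟨S', hclub', hS'⟩ := star_holds a' F c (HF c) hcdec (mem_HF c hcdec) (pos_HF c hcdec)
    (fun β hβ => (hspec β hβ).2.2.2.2.2) ha' hF dom f hdom hfib
  refine ⟨{η | η < omega1 ∧ trOrd η ∈ S'}, club_transfer hclub', ?_⟩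
  intro η hη
  have hres := hS' (trOrd η) hη.2
  have hrw : a' (trOrd η) = a η := by
    rw [ha'def]
    simp only []
    rw [trOrd_trOrd hη.1]
  rw [hrw] at hres
  exact hres
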